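/- The sum ∑_{n=1}^∞ H_{n-1} / n^2 equals ζ(3), where H_{n-1} = ∑_{j=1}^{n-1} 1/j (with H_0 = 0). -/

import Mathlib

open scoped BigOperators

noncomputable def H (n : ℕ) : ℝ := ∑ j ∈ Finset.range n, (1:ℝ)/(j+1)

noncomputable def zeta3 : ℝ := ∑' n : ℕ, (1:ℝ)/((n:ℝ)+1)^3

open Filter Topology

lemma H_zero : H 0 = 0 := by simp [H]

lemma H_succ (n : ℕ) : H (n+1) = H n + 1/((n:ℝ)+1) := by
  simp [H, Finset.sum_range_succ]

lemma H_nonneg (n : ℕ) : 0 ≤ H n :=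
  Finset.sum_nonneg fun j _ => by positivity

lemma H_le_sqrt (n : ℕ) : H n ≤ 2 * Real.sqrt n := by
  induction n with
  | zero => simp [H_zero]
  | succ n ih =>
    rw [H_succ]
    have hs : 0 ≤ Real.sqrt n := Real.sqrt_nonneg _
    have ht : 0 ≤ Real.sqrt (n+1) := Real.sqrt_nonneg _
    have hs2 : Real.sqrt n ^ 2 = (n:ℝ) := Real.sq_sqrt (by positivity)
    have ht2 : Real.sqrt ((n:ℝ)+1) ^ 2 = (n:ℝ)+1 := Real.sq_sqrt (by positivity)
    have hmono : Real.sqrt n ≤ Real.sqrt ((n:ℝ)+1) :=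
      Real.sqrt_le_sqrt (by linarith)
    have hsle : Real.sqrt n ≤ (n:ℝ)+1 := by nlinarith
    have htle : Real.sqrt ((n:ℝ)+1) ≤ (n:ℝ)+1 := by nlinarith
    have key : 1/((n:ℝ)+1) ≤ 2*(Real.sqrt ((n:ℝ)+1) - Real.sqrt n) := by
      rw [div_le_iff₀ (by positivity)]
      nlinarith [mul_nonneg (sub_nonneg.2 hmono)
        (sub_nonneg.2 (by linarith : Real.sqrt ((n:ℝ)+1) + Real.sqrt n ≤ 2*((n:ℝ)+1)))]
    have : ((n+1:ℕ):ℝ) = (n:ℝ)+1 := by push_cast; ring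
    rw [this]
    linarith

/-- The target sequence is summable. -/
lemma summable_phi : Summable (fun n : ℕ => H n / ((n:ℝ)+1)^2) := by
  have hsum : Summable (fun n : ℕ => 2 * (1 / ((n:ℝ)+1) ^ ((3:ℝ)/2))) := by
    have h0 : Summable (fun n : ℕ => 1 / ((n:ℝ)) ^ ((3:ℝ)/2)) :=
      Real.summable_one_div_nat_rpow.mpr (by norm_num)
    have h1 : Summable (fun n : ℕ => 1 / (((n+1:ℕ)):ℝ) ^ ((3:ℝ)/2)) :=
      (summable_nat_add_iff 1).mpr h0
    exact ((h1.congr (fun n => by push_cast; ring_nf)).mul_left 2)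
  refine Summable.of_nonneg_of_le (fun n => div_nonneg (H_nonneg n) (by positivity)) (fun n => ?_) hsum
  have h1 : H n / ((n:ℝ)+1)^2 ≤ 2 * Real.sqrt ((n:ℝ)+1) / ((n:ℝ)+1)^2 := by
    apply div_le_div_of_nonneg_right ?_ (by positivity)
    · exact le_trans (H_le_sqrt n) (by
        have := Real.sqrt_le_sqrt (by linarith : (n:ℝ) ≤ (n:ℝ)+1)
        linarith)
  refine h1.trans (le_of_eq ?_)
  have hx : (0:ℝ) < (n:ℝ)+1 := by positivity
  rw [Real.sqrt_eq_rpow]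
  rw [show ((n:ℝ)+1)^2 = ((n:ℝ)+1) ^ ((2:ℝ)) by rw [← Real.rpow_natCast ((n:ℝ)+1) 2]; norm_num]
  rw [mul_div_assoc, ← Real.rpow_sub hx, mul_one_div]
  norm_num
  rw [Real.rpow_neg hx.le]
  ring

lemma summable_psi : Summable (fun n : ℕ => (1:ℝ) / ((n:ℝ)+1)^3) := by
  have h0 : Summable (fun n : ℕ => 1 / ((n:ℝ)) ^ (3:ℕ)) :=
    Real.summable_one_div_nat_pow.mpr (by norm_num)
  have h1 := (summable_nat_add_iff 1).mpr h0
  exact h1.congr (fun n => by push_cast; ring_nf)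

/-- Telescoping sum: ∑_{n≥0} (1/(n+1) - 1/(n+k+1)) = H k. -/
lemma hasSum_telescope (k : ℕ) :
    HasSum (fun n : ℕ => 1/((n:ℝ)+1) - 1/((n:ℝ)+(k:ℝ)+1)) (H k) := by
  set a : ℕ → ℝ := fun n => 1/((n:ℝ)+1) with ha
  have key : ∀ N : ℕ, ∑ n ∈ Finset.range N, (1/((n:ℝ)+1) - 1/((n:ℝ)+(k:ℝ)+1))
      = H k - ∑ i ∈ Finset.range k, a (N+i) := by
    intro N
    induction N with
    | zero => simp [H, a]
    | succ N ih =>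
      rw [Finset.sum_range_succ, ih]
      have tele : ∑ i ∈ Finset.range k, (a (N+i) - a (N+1+i))
          = a N - a (N+k) := by
        have := Finset.sum_range_sub' (fun i => a (N+i)) k
        simp only [Nat.add_zero] at this
        rw [← this]
        apply Finset.sum_congr rfl
        intro i _
        congr 2
        omega
      have hsplit : ∑ i ∈ Finset.range k, a (N+1+i)
          = ∑ i ∈ Finset.range k, a (N+i) - (a N - a (N+k)) := by
        rw [← tele]; rw [Finset.sum_sub_distrib]; ring
      rw [hsplit]
      have : a N - a (N+k) = 1/((N:ℝ)+1) - 1/((N:ℝ)+(k:ℝ)+1) := by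
        simp only [a]
        push_cast
        ring_nf
      linarith [this]
  have hnonneg : ∀ n : ℕ, 0 ≤ 1/((n:ℝ)+1) - 1/((n:ℝ)+(k:ℝ)+1) := by
    intro n
    have h1 : (0:ℝ) < (n:ℝ)+1 := by positivity
    have h2 : ((n:ℝ)+1) ≤ (n:ℝ)+(k:ℝ)+1 := by
      have : (0:ℝ) ≤ (k:ℝ) := Nat.cast_nonneg k
      linarith
    have := one_div_le_one_div_of_le h1 h2
    linarith
  rw [hasSum_iff_tendsto_nat_of_nonneg hnonneg]
  have htail : Tendsto (fun N : ℕ => ∑ i ∈ Finset.range k, a (N+i)) atTop (𝓝 0) := by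
    have : Tendsto (fun N : ℕ => ∑ i ∈ Finset.range k, a (N+i)) atTop
        (𝓝 (∑ i ∈ Finset.range k, (0:ℝ))) := by
      apply tendsto_finset_sum
      intro i _
      have : Tendsto (fun N : ℕ => ((N:ℝ)+(i:ℝ)+1)) atTop atTop := by
        apply tendsto_atTop_add_const_right
        apply tendsto_atTop_add_const_right
        exact tendsto_natCast_atTop_atTop
      have h2 := this.inv_tendsto_atTop
      refine h2.congr (fun N => ?_)
      simp only [Pi.inv_apply, a]
      push_cast
      rw [one_div]
    simpa using this
  have := htail.const_sub (H k)
  simp only [sub_zero] at this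
  exact Tendsto.congr (fun N => (key N).symm) this

/-- Inner sum for fixed m. -/
lemma hasSum_inner (m : ℕ) :
    HasSum (fun n : ℕ => 1/(((m:ℝ)+1)*((n:ℝ)+1)*((m:ℝ)+(n:ℝ)+2)))
      (H (m+1) / ((m:ℝ)+1)^2) := by
  have hm : (0:ℝ) < (m:ℝ)+1 := by positivity
  have heq : (fun n : ℕ => 1/(((m:ℝ)+1)*((n:ℝ)+1)*((m:ℝ)+(n:ℝ)+2)))
      = fun n : ℕ => 1/((m:ℝ)+1)^2 * (1/((n:ℝ)+1) - 1/((n:ℝ)+((m+1:ℕ):ℝ)+1)) := by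
    funext n
    have hn : (0:ℝ) < (n:ℝ)+1 := by positivity
    have hmn : (0:ℝ) < (m:ℝ)+(n:ℝ)+2 := by positivity
    push_cast
    field_simp
    ring
  rw [heq, show H (m+1) / ((m:ℝ)+1)^2 = 1/((m:ℝ)+1)^2 * H (m+1) by ring]
  exact (hasSum_telescope (m+1)).mul_left _

noncomputable def S : ENNReal := ∑' n : ℕ, ENNReal.ofReal (H n / ((n:ℝ)+1)^2)
noncomputable def Z : ENNReal := ∑' n : ℕ, ENNReal.ofReal ((1:ℝ) / ((n:ℝ)+1)^3)
noncomputable def T : ENNReal :=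
  ∑' p : ℕ × ℕ, ENNReal.ofReal (1/(((p.1:ℝ)+1)*((p.2:ℝ)+1)*((p.1:ℝ)+(p.2:ℝ)+2)))
noncomputable def Sg : ENNReal :=
  ∑' p : ℕ × ℕ, ENNReal.ofReal (1/(((p.1:ℝ)+1)*((p.1:ℝ)+(p.2:ℝ)+2)^2))

lemma T_eq_S_add_Z : T = S + Z := by
  rw [T, ENNReal.tsum_prod']
  have hinner : ∀ m : ℕ,
      (∑' n : ℕ, ENNReal.ofReal (1/(((m:ℝ)+1)*((n:ℝ)+1)*((m:ℝ)+(n:ℝ)+2))))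
      = ENNReal.ofReal (H m / ((m:ℝ)+1)^2) + ENNReal.ofReal ((1:ℝ)/((m:ℝ)+1)^3) := by
    intro m
    rw [← ENNReal.ofReal_tsum_of_nonneg (fun n => by positivity) (hasSum_inner m).summable,
      (hasSum_inner m).tsum_eq]
    rw [show H (m+1) / ((m:ℝ)+1)^2 = H m / ((m:ℝ)+1)^2 + (1:ℝ)/((m:ℝ)+1)^3 by
      rw [H_succ]
      have hm : (0:ℝ) < (m:ℝ)+1 := by positivity
      field_simp]
    exact ENNReal.ofReal_add (div_nonneg (H_nonneg m) (by positivity)) (by positivity)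
  calc ∑' (m : ℕ) (n : ℕ),
        ENNReal.ofReal (1/(((m:ℝ)+1)*((n:ℝ)+1)*((m:ℝ)+(n:ℝ)+2)))
      = ∑' (m : ℕ), (ENNReal.ofReal (H m / ((m:ℝ)+1)^2)
          + ENNReal.ofReal ((1:ℝ)/((m:ℝ)+1)^3)) := tsum_congr hinner
    _ = S + Z := by rw [ENNReal.tsum_add]; rfl

lemma T_eq_two_Sg : T = Sg + Sg := by
  have hpt : ∀ p : ℕ × ℕ,
      ENNReal.ofReal (1/(((p.1:ℝ)+1)*((p.2:ℝ)+1)*((p.1:ℝ)+(p.2:ℝ)+2)))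
      = ENNReal.ofReal (1/(((p.1:ℝ)+1)*((p.1:ℝ)+(p.2:ℝ)+2)^2))
        + ENNReal.ofReal (1/(((p.2:ℝ)+1)*((p.2:ℝ)+(p.1:ℝ)+2)^2)) := by
    intro p
    rw [← ENNReal.ofReal_add (by positivity) (by positivity)]
    congr 1
    have h1 : (0:ℝ) < (p.1:ℝ)+1 := by positivity
    have h2 : (0:ℝ) < (p.2:ℝ)+1 := by positivity
    have h3 : (0:ℝ) < (p.1:ℝ)+(p.2:ℝ)+2 := by positivity
    field_simp
    ring
  rw [T]
  calc ∑' p : ℕ × ℕ, ENNReal.ofReal (1/(((p.1:ℝ)+1)*((p.2:ℝ)+1)*((p.1:ℝ)+(p.2:ℝ)+2)))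
      = ∑' p : ℕ × ℕ, (ENNReal.ofReal (1/(((p.1:ℝ)+1)*((p.1:ℝ)+(p.2:ℝ)+2)^2))
        + ENNReal.ofReal (1/(((p.2:ℝ)+1)*((p.2:ℝ)+(p.1:ℝ)+2)^2))) := tsum_congr hpt
    _ = Sg + Sg := by
        rw [ENNReal.tsum_add]
        congr 1
        rw [Sg, ← (Equiv.prodComm ℕ ℕ).tsum_eq
          (fun p : ℕ × ℕ => ENNReal.ofReal (1/(((p.1:ℝ)+1)*((p.1:ℝ)+(p.2:ℝ)+2)^2)))]
        rfl

lemma Sg_eq_S : Sg = S := by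
  have hreal : ∀ N : ℕ, ∑ p ∈ Finset.HasAntidiagonal.antidiagonal N,
      (1:ℝ)/(((p.1:ℝ)+1)*((p.1:ℝ)+(p.2:ℝ)+2)^2) = H (N+1) / ((N:ℝ)+2)^2 := by
    intro N
    rw [Finset.Nat.sum_antidiagonal_eq_sum_range_succ_mk]
    have hterm : ∀ k ∈ Finset.range (N+1),
        (1:ℝ)/(((k:ℝ)+1)*(((k:ℕ):ℝ)+(((N-k:ℕ)):ℝ)+2)^2)
          = (1/((k:ℝ)+1)) * (1/((N:ℝ)+2)^2) := by
      intro k hk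
      have hk' : k ≤ N := Nat.lt_succ_iff.mp (Finset.mem_range.mp hk)
      rw [Nat.cast_sub hk']
      have h1 : (0:ℝ) < (k:ℝ)+1 := by positivity
      have h2 : (0:ℝ) < (N:ℝ)+2 := by positivity
      field_simp
      rw [show (k:ℝ) + ((N:ℝ) - (k:ℝ)) + 2 = (N:ℝ)+2 by ring]
      exact div_self (by positivity)
    rw [Finset.sum_congr rfl hterm, ← Finset.sum_mul, mul_one_div]
    rfl

  have hSg : Sg = ∑' N : ℕ, ENNReal.ofReal (H (N+1) / ((N:ℝ)+2)^2) := by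
    rw [Sg, ← Finset.HasAntidiagonal.sigmaAntidiagonalEquivProd.tsum_eq
        (fun p : ℕ × ℕ => ENNReal.ofReal (1/(((p.1:ℝ)+1)*((p.1:ℝ)+(p.2:ℝ)+2)^2))),
      ENNReal.tsum_sigma']
    refine tsum_congr (fun N => ?_)
    simp only [Finset.HasAntidiagonal.sigmaAntidiagonalEquivProd_apply]
    rw [Finset.tsum_subtype (Finset.HasAntidiagonal.antidiagonal N)
      (fun p : ℕ × ℕ => ENNReal.ofReal (1/(((p.1:ℝ)+1)*((p.1:ℝ)+(p.2:ℝ)+2)^2)))]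
    rw [← ENNReal.ofReal_sum_of_nonneg (fun p _ => by positivity), hreal N]
  have hS : S = ∑' N : ℕ, ENNReal.ofReal (H (N+1) / ((N:ℝ)+2)^2) := by
    rw [S, tsum_eq_zero_add' ENNReal.summable]
    have h0 : ENNReal.ofReal (H 0 / (((0:ℕ):ℝ)+1)^2) = 0 := by
      simp [H_zero]
    rw [h0, zero_add]
    refine tsum_congr (fun N => ?_)
    congr 1
    push_cast
    ring_nf
  rw [hSg, hS]

lemma S_ne_top : S ≠ ⊤ := by
  rw [S, ← ENNReal.ofReal_tsum_of_nonneg (fun n => div_nonneg (H_nonneg n) (by positivity)) summable_phi]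
  exact ENNReal.ofReal_ne_top

theorem stmt1 : ∑' n : ℕ, H n / ((n:ℝ)+1)^2 = zeta3 := by
  have hSZ : S = Z := by
    have h1 : S + Z = S + S := by
      rw [← T_eq_S_add_Z, T_eq_two_Sg, Sg_eq_S]
    exact ((ENNReal.add_right_inj S_ne_top).mp h1).symm
  have hS : ENNReal.ofReal (∑' n : ℕ, H n / ((n:ℝ)+1)^2) = S :=
    (ENNReal.ofReal_tsum_of_nonneg (fun n => div_nonneg (H_nonneg n) (by positivity)) summable_phi).trans rfl
  have hZ : ENNReal.ofReal zeta3 = Z :=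
    (ENNReal.ofReal_tsum_of_nonneg (fun n => by positivity) summable_psi).trans rfl
  have := hS.trans (hSZ.trans hZ.symm)
  exact (ENNReal.ofReal_eq_ofReal_iff
    (tsum_nonneg fun n => div_nonneg (H_nonneg n) (by positivity))
    (tsum_nonneg fun n => by positivity)).mp this
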